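/- Let 𝓜 be the set of matchings on ℕ with the partial order ⊑ generated by type I moves (adding an edge; shifting an endpoint j of an edge to j+1 when j+1 is unused) and type II moves (for edges (k,i),(j,ℓ)→(k,j),(i,ℓ) or (i,k),(j,ℓ)→(i,j),(k,ℓ) under the interleaving and gap conditions described). Then for the matchings Γ_n (n ≥ 3) with edges (2i+1, 2i+4) for i = 0,…,n−2 and (2, 2n−1), one has Γ_n ⊑ Γ_m whenever 3 ≤ n < m. -/

import Mathlib

/-- The vertex `v` is incident to an edge of `Γ`. -/
def MIncident (Γ : Finset (ℕ × ℕ)) (v : ℕ) : Prop := ∃ e ∈ Γ, e.1 = v ∨ e.2 = v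

/-- Type I moves: add an edge, or shift one endpoint of an edge up by one when the new
vertex is unused. -/
inductive MoveI : Finset (ℕ × ℕ) → Finset (ℕ × ℕ) → Prop
  | add (Γ : Finset (ℕ × ℕ)) (i j : ℕ) : i < j → ¬ MIncident Γ i → ¬ MIncident Γ j →
      MoveI Γ (insert (i, j) Γ)
  | shiftR (Γ : Finset (ℕ × ℕ)) (i j : ℕ) : (i, j) ∈ Γ → ¬ MIncident Γ (j + 1) →
      MoveI Γ (insert (i, j + 1) (Γ.erase (i, j)))
  | shiftL (Γ : Finset (ℕ × ℕ)) (i j : ℕ) : (i, j) ∈ Γ → ¬ MIncident Γ (i + 1) →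
      MoveI Γ (insert (i + 1, j) (Γ.erase (i, j)))

/-- Type II moves on matchings: for edges `e = (i,j)`, `e' = (k,ℓ)` with `i < j`, `k < ℓ`,
`j < ℓ`: (a) if `k < i < j < ℓ` and every vertex strictly between `k` and `i` lying on an
edge is matched to a vertex `> j`, replace `e, e'` by `(k,j), (i,ℓ)`; (b) if `i < k < j < ℓ`
and every vertex strictly between `k` and `j` lying on an edge is matched to a vertex `> j`,
replace `e, e'` by `(i,k), (j,ℓ)`. -/
inductive MoveII : Finset (ℕ × ℕ) → Finset (ℕ × ℕ) → Prop
  | nest (Γ : Finset (ℕ × ℕ)) (i j k l : ℕ) : (i, j) ∈ Γ → (k, l) ∈ Γ →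
      k < i → i < j → j < l →
      (∀ v, k < v → v < i → ∀ e ∈ Γ, (e.1 = v → j < e.2) ∧ (e.2 = v → j < e.1)) →
      MoveII Γ (insert (k, j) (insert (i, l) ((Γ.erase (i, j)).erase (k, l))))
  | cross (Γ : Finset (ℕ × ℕ)) (i j k l : ℕ) : (i, j) ∈ Γ → (k, l) ∈ Γ →
      i < k → k < j → j < l →
      (∀ v, k < v → v < j → ∀ e ∈ Γ, (e.1 = v → j < e.2) ∧ (e.2 = v → j < e.1)) →
      MoveII Γ (insert (i, k) (insert (j, l) ((Γ.erase (i, j)).erase (k, l))))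

/-- The matching `Γ_n` (n ≥ 3), with edges `(2i+1, 2i+4)` for `i = 0, …, n-2` and the
edge `(2, 2n-1)`. -/
def Gam (n : ℕ) : Finset (ℕ × ℕ) :=
  insert (2, 2 * n - 1) ((Finset.range (n - 1)).image (fun i => (2 * i + 1, 2 * i + 4)))

open Finset Relation

abbrev MRel : Finset (ℕ × ℕ) → Finset (ℕ × ℕ) → Prop := fun Γ Γ' => MoveI Γ Γ' ∨ MoveII Γ Γ'

lemma notInc {Γ : Finset (ℕ × ℕ)} {v : ℕ} (h : ∀ a b : ℕ, (a, b) ∈ Γ → a ≠ v ∧ b ≠ v) :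
    ¬ MIncident Γ v := by
  rintro ⟨⟨a, b⟩, he, h' | h'⟩
  · exact (h a b he).1 h'
  · exact (h a b he).2 h'

lemma head_shiftR {Γ Δ Θ : Finset (ℕ × ℕ)} (i j : ℕ) (h1 : (i, j) ∈ Γ)
    (h2 : ¬ MIncident Γ (j + 1)) (heq : insert (i, j + 1) (Γ.erase (i, j)) = Δ)
    (h3 : ReflTransGen MRel Δ Θ) : ReflTransGen MRel Γ Θ :=
  ReflTransGen.head (Or.inl (MoveI.shiftR Γ i j h1 h2)) (heq ▸ h3)

lemma head_shiftL {Γ Δ Θ : Finset (ℕ × ℕ)} (i j : ℕ) (h1 : (i, j) ∈ Γ)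
    (h2 : ¬ MIncident Γ (i + 1)) (heq : insert (i + 1, j) (Γ.erase (i, j)) = Δ)
    (h3 : ReflTransGen MRel Δ Θ) : ReflTransGen MRel Γ Θ :=
  ReflTransGen.head (Or.inl (MoveI.shiftL Γ i j h1 h2)) (heq ▸ h3)

lemma erase₂ {a e : ℕ × ℕ} {D : Finset (ℕ × ℕ)} (h1 : e ≠ a) (h2 : e ∉ D) :
    (insert a (insert e D)).erase e = insert a D := by
  rw [Finset.insert_comm, Finset.erase_insert (by simp [h1, h2])]

lemma erase₃ {a b e : ℕ × ℕ} {D : Finset (ℕ × ℕ)} (h1 : e ≠ a) (h2 : e ≠ b) (h3 : e ∉ D) :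
    (insert a (insert b (insert e D))).erase e = insert a (insert b D) := by
  rw [Finset.insert_comm b e, Finset.insert_comm a e,
    Finset.erase_insert (by simp [h1, h2, h3])]

def St (k t : ℕ) : Finset (ℕ × ℕ) :=
  insert (2, 2 * k + 7) (insert (2 * t + 1, 2 * t + 6)
    ((Finset.range t).image (fun i => (2 * i + 1, 2 * i + 4)) ∪
     (Finset.Ico t (k + 1)).image (fun i => (2 * i + 5, 2 * i + 8))))

lemma lemA (k : ℕ) : ReflTransGen MRel (Gam (k + 3)) (St k (k + 1)) := by
  have hG : Gam (k + 3) = insert (2, 2 * k + 5) (insert (2 * k + 3, 2 * k + 6)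
      ((Finset.range (k + 1)).image (fun i => (2 * i + 1, 2 * i + 4)))) := by
    unfold Gam
    have e1 : 2 * (k + 3) - 1 = 2 * k + 5 := by omega
    have e2 : k + 3 - 1 = k + 2 := by omega
    rw [e1, e2, Finset.range_add_one]
    simp only [Finset.image_insert]
    have e3 : 2 * (k + 1) + 1 = 2 * k + 3 := by omega
    have e4 : 2 * (k + 1) + 4 = 2 * k + 6 := by omega
    rw [e3, e4]
  rw [hG]
  -- move (2k+3, 2k+6) to (2k+3, 2k+8)
  refine head_shiftR (2 * k + 3) (2 * k + 6) (by simp) ?_ ?_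
      (Δ := insert (2 * k + 3, 2 * k + 6 + 1) (insert (2, 2 * k + 5)
        ((Finset.range (k + 1)).image (fun i => (2 * i + 1, 2 * i + 4))))) ?_
  · refine notInc ?_
    intro a b hab
    simp only [Finset.mem_insert, Finset.mem_image, Finset.mem_range, Prod.mk.injEq] at hab
    rcases hab with ⟨rfl, rfl⟩ | ⟨rfl, rfl⟩ | ⟨i, hi, rfl, rfl⟩ <;> omega
  · rw [erase₂ (by simp only [ne_eq, Prod.mk.injEq]; omega) (by
      intro hm
      simp only [Finset.mem_image, Finset.mem_range, Prod.mk.injEq] at hm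
      obtain ⟨i, hi, h1, h2⟩ := hm; omega)]
  refine head_shiftR (2 * k + 3) (2 * k + 6 + 1) (by simp) ?_ ?_
      (Δ := insert (2 * k + 3, 2 * k + 6 + 1 + 1) (insert (2, 2 * k + 5)
        ((Finset.range (k + 1)).image (fun i => (2 * i + 1, 2 * i + 4))))) ?_
  · refine notInc ?_
    intro a b hab
    simp only [Finset.mem_insert, Finset.mem_image, Finset.mem_range, Prod.mk.injEq] at hab
    rcases hab with ⟨rfl, rfl⟩ | ⟨rfl, rfl⟩ | ⟨i, hi, rfl, rfl⟩ <;> omega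
  · rw [Finset.erase_insert (by
      intro hm
      simp only [Finset.mem_insert, Finset.mem_image, Finset.mem_range, Prod.mk.injEq] at hm
      rcases hm with ⟨h1, h2⟩ | ⟨i, hi, h1, h2⟩ <;> omega)]
  -- move (2, 2k+5) to (2, 2k+7)
  refine head_shiftR 2 (2 * k + 5) (by simp) ?_ ?_
      (Δ := insert (2, 2 * k + 5 + 1) (insert (2 * k + 3, 2 * k + 6 + 1 + 1)
        ((Finset.range (k + 1)).image (fun i => (2 * i + 1, 2 * i + 4))))) ?_
  · refine notInc ?_
    intro a b hab
    simp only [Finset.mem_insert, Finset.mem_image, Finset.mem_range, Prod.mk.injEq] at hab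
    rcases hab with ⟨rfl, rfl⟩ | ⟨rfl, rfl⟩ | ⟨i, hi, rfl, rfl⟩ <;> omega
  · rw [erase₂ (by simp only [ne_eq, Prod.mk.injEq]; omega) (by
      intro hm
      simp only [Finset.mem_image, Finset.mem_range, Prod.mk.injEq] at hm
      obtain ⟨i, hi, h1, h2⟩ := hm; omega)]
  refine head_shiftR 2 (2 * k + 5 + 1) (by simp) ?_ ?_
      (Δ := insert (2, 2 * k + 5 + 1 + 1) (insert (2 * k + 3, 2 * k + 6 + 1 + 1)
        ((Finset.range (k + 1)).image (fun i => (2 * i + 1, 2 * i + 4))))) ?_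
  · refine notInc ?_
    intro a b hab
    simp only [Finset.mem_insert, Finset.mem_image, Finset.mem_range, Prod.mk.injEq] at hab
    rcases hab with ⟨rfl, rfl⟩ | ⟨rfl, rfl⟩ | ⟨i, hi, rfl, rfl⟩ <;> omega
  · rw [Finset.erase_insert (by
      intro hm
      simp only [Finset.mem_insert, Finset.mem_image, Finset.mem_range, Prod.mk.injEq] at hm
      rcases hm with ⟨h1, h2⟩ | ⟨i, hi, h1, h2⟩ <;> omega)]
  -- done, identify with St k (k+1)
  have : insert (2, 2 * k + 5 + 1 + 1) (insert (2 * k + 3, 2 * k + 6 + 1 + 1)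
        ((Finset.range (k + 1)).image (fun i => (2 * i + 1, 2 * i + 4)))) = St k (k + 1) := by
    unfold St
    have e1 : 2 * k + 5 + 1 + 1 = 2 * k + 7 := by omega
    have e2 : 2 * k + 6 + 1 + 1 = 2 * k + 8 := by omega
    have e3 : 2 * (k + 1) + 1 = 2 * k + 3 := by omega
    have e4 : 2 * (k + 1) + 6 = 2 * k + 8 := by omega
    rw [e1, e2, e3, e4, Finset.Ico_self, Finset.image_empty, Finset.union_empty]
  rw [this]

lemma lemB (k t : ℕ) (ht : t ≤ k) : ReflTransGen MRel (St k (t + 1)) (St k t) := by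
  have hS : St k (t + 1) = insert (2, 2 * k + 7) (insert (2 * t + 3, 2 * t + 8)
      (insert (2 * t + 1, 2 * t + 4)
        ((Finset.range t).image (fun i => (2 * i + 1, 2 * i + 4)) ∪
         (Finset.Ico (t + 1) (k + 1)).image (fun i => (2 * i + 5, 2 * i + 8))))) := by
    unfold St
    have e1 : 2 * (t + 1) + 1 = 2 * t + 3 := by omega
    have e2 : 2 * (t + 1) + 6 = 2 * t + 8 := by omega
    rw [e1, e2, Finset.range_add_one]
    simp only [Finset.image_insert]
    rw [Finset.insert_union]
  rw [hS]
  -- shiftR (2t+1, 2t+4) → (2t+1, 2t+5)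
  refine head_shiftR (2 * t + 1) (2 * t + 4) (by simp) ?_ ?_
      (Δ := insert (2 * t + 1, 2 * t + 4 + 1) (insert (2, 2 * k + 7) (insert (2 * t + 3, 2 * t + 8)
        ((Finset.range t).image (fun i => (2 * i + 1, 2 * i + 4)) ∪
         (Finset.Ico (t + 1) (k + 1)).image (fun i => (2 * i + 5, 2 * i + 8)))))) ?_
  · refine notInc ?_
    intro a b hab
    simp only [Finset.mem_insert, Finset.mem_union, Finset.mem_image, Finset.mem_range,
      Finset.mem_Ico, Prod.mk.injEq] at hab
    rcases hab with ⟨rfl, rfl⟩ | ⟨rfl, rfl⟩ | ⟨rfl, rfl⟩ | ⟨i, hi, rfl, rfl⟩ | ⟨i, hi, rfl, rfl⟩ <;>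
      omega
  · rw [erase₃ (by simp only [ne_eq, Prod.mk.injEq]; omega)
      (by simp only [ne_eq, Prod.mk.injEq]; omega) (by
      intro hm
      simp only [Finset.mem_union, Finset.mem_image, Finset.mem_range, Finset.mem_Ico,
        Prod.mk.injEq] at hm
      rcases hm with ⟨i, hi, h1, h2⟩ | ⟨i, hi, h1, h2⟩ <;> omega)]
  -- shiftR (2t+1, 2t+5) → (2t+1, 2t+6)
  refine head_shiftR (2 * t + 1) (2 * t + 4 + 1) (by simp) ?_ ?_
      (Δ := insert (2 * t + 1, 2 * t + 4 + 1 + 1) (insert (2, 2 * k + 7) (insert (2 * t + 3, 2 * t + 8)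
        ((Finset.range t).image (fun i => (2 * i + 1, 2 * i + 4)) ∪
         (Finset.Ico (t + 1) (k + 1)).image (fun i => (2 * i + 5, 2 * i + 8)))))) ?_
  · refine notInc ?_
    intro a b hab
    simp only [Finset.mem_insert, Finset.mem_union, Finset.mem_image, Finset.mem_range,
      Finset.mem_Ico, Prod.mk.injEq] at hab
    rcases hab with ⟨rfl, rfl⟩ | ⟨rfl, rfl⟩ | ⟨rfl, rfl⟩ | ⟨i, hi, rfl, rfl⟩ | ⟨i, hi, rfl, rfl⟩ <;>
      omega
  · rw [Finset.erase_insert (by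
      intro hm
      simp only [Finset.mem_insert, Finset.mem_union, Finset.mem_image, Finset.mem_range,
        Finset.mem_Ico, Prod.mk.injEq] at hm
      rcases hm with ⟨h1, h2⟩ | ⟨h1, h2⟩ | ⟨i, hi, h1, h2⟩ | ⟨i, hi, h1, h2⟩ <;> omega)]
  -- shiftL (2t+3, 2t+8) → (2t+4, 2t+8)
  refine head_shiftL (2 * t + 3) (2 * t + 8) (by simp) ?_ ?_
      (Δ := insert (2 * t + 3 + 1, 2 * t + 8) (insert (2 * t + 1, 2 * t + 4 + 1 + 1)
        (insert (2, 2 * k + 7)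
        ((Finset.range t).image (fun i => (2 * i + 1, 2 * i + 4)) ∪
         (Finset.Ico (t + 1) (k + 1)).image (fun i => (2 * i + 5, 2 * i + 8)))))) ?_
  · refine notInc ?_
    intro a b hab
    simp only [Finset.mem_insert, Finset.mem_union, Finset.mem_image, Finset.mem_range,
      Finset.mem_Ico, Prod.mk.injEq] at hab
    rcases hab with ⟨rfl, rfl⟩ | ⟨rfl, rfl⟩ | ⟨rfl, rfl⟩ | ⟨i, hi, rfl, rfl⟩ | ⟨i, hi, rfl, rfl⟩ <;>
      omega
  · rw [erase₃ (by simp only [ne_eq, Prod.mk.injEq]; omega)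
      (by simp only [ne_eq, Prod.mk.injEq]; omega) (by
      intro hm
      simp only [Finset.mem_union, Finset.mem_image, Finset.mem_range, Finset.mem_Ico,
        Prod.mk.injEq] at hm
      rcases hm with ⟨i, hi, h1, h2⟩ | ⟨i, hi, h1, h2⟩ <;> omega)]
  -- shiftL (2t+4, 2t+8) → (2t+5, 2t+8)
  refine head_shiftL (2 * t + 3 + 1) (2 * t + 8) (by simp) ?_ ?_
      (Δ := insert (2 * t + 3 + 1 + 1, 2 * t + 8) (insert (2 * t + 1, 2 * t + 4 + 1 + 1)
        (insert (2, 2 * k + 7)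
        ((Finset.range t).image (fun i => (2 * i + 1, 2 * i + 4)) ∪
         (Finset.Ico (t + 1) (k + 1)).image (fun i => (2 * i + 5, 2 * i + 8)))))) ?_
  · refine notInc ?_
    intro a b hab
    simp only [Finset.mem_insert, Finset.mem_union, Finset.mem_image, Finset.mem_range,
      Finset.mem_Ico, Prod.mk.injEq] at hab
    rcases hab with ⟨rfl, rfl⟩ | ⟨rfl, rfl⟩ | ⟨rfl, rfl⟩ | ⟨i, hi, rfl, rfl⟩ | ⟨i, hi, rfl, rfl⟩ <;>
      omega
  · rw [Finset.erase_insert (by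
      intro hm
      simp only [Finset.mem_insert, Finset.mem_union, Finset.mem_image, Finset.mem_range,
        Finset.mem_Ico, Prod.mk.injEq] at hm
      rcases hm with ⟨h1, h2⟩ | ⟨h1, h2⟩ | ⟨i, hi, h1, h2⟩ | ⟨i, hi, h1, h2⟩ <;> omega)]
  -- identify with St k t
  have hT : insert (2 * t + 3 + 1 + 1, 2 * t + 8) (insert (2 * t + 1, 2 * t + 4 + 1 + 1)
        (insert (2, 2 * k + 7)
        ((Finset.range t).image (fun i => (2 * i + 1, 2 * i + 4)) ∪
         (Finset.Ico (t + 1) (k + 1)).image (fun i => (2 * i + 5, 2 * i + 8))))) = St k t := by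
    unfold St
    have e1 : 2 * t + 3 + 1 + 1 = 2 * t + 5 := by omega
    have e2 : 2 * t + 4 + 1 + 1 = 2 * t + 6 := by omega
    rw [e1, e2, ← Finset.insert_Ico_add_one_left_eq_Ico (show t < k + 1 by omega)]
    simp only [Nat.succ_eq_add_one, Finset.image_insert, Finset.union_insert]
    rw [Finset.insert_comm (2 * t + 5, 2 * t + 8) (2 * t + 1, 2 * t + 6),
      Finset.insert_comm (2 * t + 5, 2 * t + 8) (2, 2 * k + 7),
      Finset.insert_comm (2 * t + 1, 2 * t + 6) (2, 2 * k + 7)]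
  rw [hT]

lemma imgsplit (k : ℕ) : (Finset.range (k + 3)).image (fun i => (2 * i + 1, 2 * i + 4)) =
    insert (1, 4) (insert (3, 6)
      ((Finset.Ico 0 (k + 1)).image (fun i => (2 * i + 5, 2 * i + 8)))) := by
  ext ⟨a, b⟩
  simp only [Finset.mem_image, Finset.mem_range, Finset.mem_insert, Finset.mem_Ico,
    Prod.mk.injEq]
  constructor
  · rintro ⟨i, hi, rfl, rfl⟩
    rcases i with _ | (_ | j)
    · exact Or.inl (by omega)
    · exact Or.inr (Or.inl (by omega))
    · exact Or.inr (Or.inr ⟨j, by omega, by omega, by omega⟩)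
  · rintro (⟨rfl, rfl⟩ | ⟨rfl, rfl⟩ | ⟨j, hj, h1, h2⟩)
    · exact ⟨0, by omega, by omega, by omega⟩
    · exact ⟨1, by omega, by omega, by omega⟩
    · exact ⟨j + 2, by omega, by omega, by omega⟩

lemma lemC (k : ℕ) : ReflTransGen MRel (St k 0) (Gam (k + 4)) := by
  have hS : St k 0 = insert (2, 2 * k + 7) (insert (1, 6)
      ((Finset.Ico 0 (k + 1)).image (fun i => (2 * i + 5, 2 * i + 8)))) := by
    unfold St
    norm_num
  rw [hS]
  -- add the edge (3,4)
  refine ReflTransGen.head (Or.inl (MoveI.add _ 3 4 (by norm_num) ?_ ?_)) ?_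
  · refine notInc ?_
    intro a b hab
    simp only [Finset.mem_insert, Finset.mem_image, Finset.mem_Ico, Prod.mk.injEq] at hab
    rcases hab with ⟨rfl, rfl⟩ | ⟨rfl, rfl⟩ | ⟨i, hi, rfl, rfl⟩ <;> omega
  · refine notInc ?_
    intro a b hab
    simp only [Finset.mem_insert, Finset.mem_image, Finset.mem_Ico, Prod.mk.injEq] at hab
    rcases hab with ⟨rfl, rfl⟩ | ⟨rfl, rfl⟩ | ⟨i, hi, rfl, rfl⟩ <;> omega
  -- type II nest move on (3,4) and (1,6)
  refine ReflTransGen.head (Or.inr (MoveII.nest _ 3 4 1 6 (by simp) (by simp)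
    (by norm_num) (by norm_num) (by norm_num) ?_)) ?_
  · intro v hv1 hv2 e he
    have hv : v = 2 := by omega
    subst hv
    simp only [Finset.mem_insert, Finset.mem_image, Finset.mem_Ico, Prod.mk.injEq] at he
    rcases he with rfl | rfl | rfl | ⟨i, hi, rfl⟩ <;> constructor <;> intro h <;>
      simp_all
  · have hres : insert (1, 4) (insert (3, 6)
        (((insert (3, 4) (insert (2, 2 * k + 7) (insert (1, 6)
          ((Finset.Ico 0 (k + 1)).image (fun i => (2 * i + 5, 2 * i + 8)))))).erase (3, 4)).erase
          (1, 6))) = Gam (k + 4) := by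
      rw [Finset.erase_insert (by
        intro hm
        simp only [Finset.mem_insert, Finset.mem_image, Finset.mem_Ico, Prod.mk.injEq] at hm
        rcases hm with ⟨h1, h2⟩ | ⟨h1, h2⟩ | ⟨i, hi, h1, h2⟩ <;> omega)]
      rw [erase₂ (by simp only [ne_eq, Prod.mk.injEq]; omega) (by
        intro hm
        simp only [Finset.mem_image, Finset.mem_Ico, Prod.mk.injEq] at hm
        obtain ⟨i, hi, h1, h2⟩ := hm; omega)]
      unfold Gam
      have e1 : 2 * (k + 4) - 1 = 2 * k + 7 := by omega
      have e2 : k + 4 - 1 = k + 3 := by omega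
      rw [e1, e2, imgsplit]
      rw [Finset.insert_comm (2, 2 * k + 7) (1, 4), Finset.insert_comm (2, 2 * k + 7) (3, 6)]
    rw [hres]

lemma lemWave (k : ℕ) : ∀ t, t ≤ k + 1 → ReflTransGen MRel (St k t) (St k 0)
  | 0, _ => .refl
  | t + 1, h => (lemB k t (by omega)).trans (lemWave k t (by omega))

lemma stepUp (m : ℕ) (hm : 3 ≤ m) : ReflTransGen MRel (Gam m) (Gam (m + 1)) := by
  obtain ⟨k, rfl⟩ : ∃ k, m = k + 3 := ⟨m - 3, by omega⟩
  exact (lemA k).trans ((lemWave k (k + 1) le_rfl).trans (lemC k))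


/-- under the order `⊑` generated by type I and type II moves, one has
`Γ_n ⊑ Γ_m` whenever `3 ≤ n < m`. -/
theorem stmt13 (n m : ℕ) (hn : 3 ≤ n) (hnm : n < m) :
    Relation.ReflTransGen (fun Γ Γ' => MoveI Γ Γ' ∨ MoveII Γ Γ') (Gam n) (Gam m) := by
  have H : ∀ m, n + 1 ≤ m → Relation.ReflTransGen MRel (Gam n) (Gam m) := by
    intro m hm
    induction m, hm using Nat.le_induction with
    | base => exact stepUp n hn
    | succ m hm ih => exact ih.trans (stepUp m (by omega))
  exact H m hnm
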